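/- Under the assumptions p = softmax(s), Hess(s_k) = 0 at x, the directional derivative e_a(g^D(e_b, e_c)) equals M_{a,c,b} + M_{a,b,c} + (J(s) e_b)^T A_a J(s) e_c, where M_{a,b,c} = (Hess(p_b) e_a)^T J(s)^T (P − pp^T) J(s) e_c and (A_a)_{kl} = Σ_i ∂_i p_a [(δ_{kl} − p_l) ∂_i p_k − p_k ∂_i p_l]. -/

import Mathlib

open Real Matrix

noncomputable def pd {d : ℕ} (f : (Fin d → ℝ) → ℝ) (x : Fin d → ℝ) (i : Fin d) : ℝ :=
  fderiv ℝ f x (Pi.single i 1)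

noncomputable def softmax {C : ℕ} (a : Fin C → ℝ) : Fin C → ℝ :=
  fun i => Real.exp (a i) / ∑ k, Real.exp (a k)

noncomputable def grad {d : ℕ} (f : (Fin d → ℝ) → ℝ) (x : Fin d → ℝ) : Fin d → ℝ :=
  fun i => pd f x i

noncomputable def hess {d : ℕ} (f : (Fin d → ℝ) → ℝ) (x : Fin d → ℝ) :
    Matrix (Fin d) (Fin d) ℝ :=
  Matrix.of fun i j => pd (fun y => pd f y j) x i

/-- Jacobian of the score function. -/
noncomputable def Js {d C : ℕ} (s : (Fin d → ℝ) → Fin C → ℝ) (y : Fin d → ℝ) :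
    Matrix (Fin C) (Fin d) ℝ :=
  Matrix.of fun k i => pd (fun z => s z k) y i

/-- The data information matrix D = J(s)ᵀ (P − ppᵀ) J(s). -/
noncomputable def Dmat {d C : ℕ} (s : (Fin d → ℝ) → Fin C → ℝ) (y : Fin d → ℝ) :
    Matrix (Fin d) (Fin d) ℝ :=
  (Js s y)ᵀ * (Matrix.diagonal (softmax (s y))
      - Matrix.vecMulVec (softmax (s y)) (softmax (s y))) * Js s y

/-- The matrix A_a. -/
noncomputable def Amat {d C : ℕ} (s : (Fin d → ℝ) → Fin C → ℝ) (a : Fin C)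
    (x : Fin d → ℝ) : Matrix (Fin C) (Fin C) ℝ :=
  Matrix.of fun k l => ∑ i, pd (fun y => softmax (s y) a) x i *
    (((if k = l then (1:ℝ) else 0) - softmax (s x) l) * pd (fun y => softmax (s y) k) x i
      - softmax (s x) k * pd (fun y => softmax (s y) l) x i)

/-- The expression M_{a,b,c} = (Hess(p_b) e_a)ᵀ J(s)ᵀ (P − ppᵀ) J(s) e_c. -/
noncomputable def Mabc {d C : ℕ} (s : (Fin d → ℝ) → Fin C → ℝ) (a b c : Fin C)
    (x : Fin d → ℝ) : ℝ :=
  ((hess (fun y => softmax (s y) b) x).mulVec (grad (fun y => softmax (s y) a) x)) ⬝ᵥ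
    (Dmat s x).mulVec (grad (fun y => softmax (s y) c) x)

section helpers
variable {d : ℕ}

lemma pd_sum {ι : Type*} (t : Finset ι) (f : ι → (Fin d → ℝ) → ℝ) (x : Fin d → ℝ) (i : Fin d)
    (hf : ∀ j ∈ t, DifferentiableAt ℝ (f j) x) :
    pd (fun y => ∑ j ∈ t, f j y) x i = ∑ j ∈ t, pd (f j) x i := by
  unfold pd
  rw [fderiv_fun_sum hf]
  simp

lemma pd_mul (f g : (Fin d → ℝ) → ℝ) (x : Fin d → ℝ) (i : Fin d)
    (hf : DifferentiableAt ℝ f x) (hg : DifferentiableAt ℝ g x) :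
    pd (fun y => f y * g y) x i = pd f x i * g x + f x * pd g x i := by
  unfold pd
  rw [fderiv_fun_mul hf hg]
  simp
  ring

lemma pd_sub (f g : (Fin d → ℝ) → ℝ) (x : Fin d → ℝ) (i : Fin d)
    (hf : DifferentiableAt ℝ f x) (hg : DifferentiableAt ℝ g x) :
    pd (fun y => f y - g y) x i = pd f x i - pd g x i := by
  unfold pd
  rw [fderiv_fun_sub hf hg]
  simp

lemma contDiff_p {C : ℕ} (s : (Fin d → ℝ) → Fin C → ℝ)
    (hs : ∀ k, ContDiff ℝ 2 (fun y => s y k)) (k : Fin C) :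
    ContDiff ℝ 2 (fun y => softmax (s y) k) := by
  refine ContDiff.div ((hs k).exp) (ContDiff.sum fun l _ => (hs l).exp) fun y => ?_
  exact (Finset.sum_pos (fun l _ => Real.exp_pos _) ⟨k, Finset.mem_univ k⟩).ne'

lemma diff_pd (f : (Fin d → ℝ) → ℝ) (hf : ContDiff ℝ 2 f) (x : Fin d → ℝ) (j : Fin d) :
    DifferentiableAt ℝ (fun y => pd f y j) x := by
  have h1 : DifferentiableAt ℝ (fderiv ℝ f) x :=
    ((hf.fderiv_right (m := 1) le_rfl).differentiable one_ne_zero) x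
  exact h1.clm_apply (differentiableAt_const _)

lemma pd_pd (f : (Fin d → ℝ) → ℝ) (hf : ContDiff ℝ 2 f) (x : Fin d → ℝ) (i j : Fin d) :
    pd (fun y => pd f y j) x i = fderiv ℝ (fderiv ℝ f) x (Pi.single i 1) (Pi.single j 1) := by
  have h1 : DifferentiableAt ℝ (fderiv ℝ f) x :=
    ((hf.fderiv_right (m := 1) le_rfl).differentiable one_ne_zero) x
  unfold pd
  rw [fderiv_clm_apply h1 (differentiableAt_const (Pi.single j 1))]
  simp

lemma pd_pd_symm (f : (Fin d → ℝ) → ℝ) (hf : ContDiff ℝ 2 f) (x : Fin d → ℝ) (i j : Fin d) :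
    pd (fun y => pd f y j) x i = pd (fun y => pd f y i) x j := by
  rw [pd_pd f hf, pd_pd f hf]
  exact hf.contDiffAt.isSymmSndFDerivAt (by norm_num) _ _

end helpers

section mid
variable {d C : ℕ}

lemma pd_const (r : ℝ) (x : Fin d → ℝ) (m : Fin d) : pd (fun _ => r) x m = 0 := by
  unfold pd; rw [fderiv_fun_const]; simp

lemma pd_mul3 (f1 f2 f3 : (Fin d → ℝ) → ℝ) (x : Fin d → ℝ) (m : Fin d)
    (h1 : DifferentiableAt ℝ f1 x) (h2 : DifferentiableAt ℝ f2 x)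
    (h3 : DifferentiableAt ℝ f3 x) :
    pd (fun y => f1 y * f2 y * f3 y) x m =
      pd f1 x m * f2 x * f3 x + f1 x * pd f2 x m * f3 x + f1 x * f2 x * pd f3 x m := by
  rw [pd_mul _ _ _ _ (h1.fun_mul h2) h3, pd_mul _ _ _ _ h1 h2]
  ring

/-- the entries of P - ppᵀ as a function of y -/
noncomputable def Efun (s : (Fin d → ℝ) → Fin C → ℝ) (k l : Fin C) (y : Fin d → ℝ) : ℝ :=
  (if k = l then softmax (s y) k else 0) - softmax (s y) k * softmax (s y) l

/-- inner double sum: entry (i,j) of D as a function of y -/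
noncomputable def g2 (s : (Fin d → ℝ) → Fin C → ℝ) (i j : Fin d) (y : Fin d → ℝ) : ℝ :=
  ∑ k, ∑ l, pd (fun z => s z k) y i * Efun s k l y * pd (fun z => s z l) y j

lemma Efun_diff (s : (Fin d → ℝ) → Fin C → ℝ) (hs : ∀ k, ContDiff ℝ 2 (fun y => s y k))
    (k l : Fin C) (z : Fin d → ℝ) : DifferentiableAt ℝ (Efun s k l) z := by
  have hpD : ∀ (k : Fin C) (z), DifferentiableAt ℝ (fun y => softmax (s y) k) z :=
    fun k z => ((contDiff_p s hs k).differentiable two_ne_zero) z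
  unfold Efun
  by_cases hkl : k = l
  · simp only [hkl, if_true]
    exact (hpD l z).sub ((hpD l z).mul (hpD l z))
  · simp only [hkl, if_false]
    exact (differentiableAt_const 0).sub ((hpD k z).mul (hpD l z))

lemma pd_Efun (s : (Fin d → ℝ) → Fin C → ℝ) (hs : ∀ k, ContDiff ℝ 2 (fun y => s y k))
    (k l : Fin C) (x : Fin d → ℝ) (m : Fin d) :
    pd (Efun s k l) x m =
      (if k = l then pd (fun y => softmax (s y) k) x m else 0)
        - (pd (fun y => softmax (s y) k) x m * softmax (s x) l
            + softmax (s x) k * pd (fun y => softmax (s y) l) x m) := by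
  have hpD : ∀ (k : Fin C) (z), DifferentiableAt ℝ (fun y => softmax (s y) k) z :=
    fun k z => ((contDiff_p s hs k).differentiable two_ne_zero) z
  unfold Efun
  by_cases hkl : k = l
  · subst hkl
    simp only [if_true]
    rw [pd_sub _ _ _ _ (hpD k x) ((hpD k x).fun_mul (hpD k x)),
      pd_mul _ _ _ _ (hpD k x) (hpD k x)]
  · simp only [hkl, if_false]
    rw [pd_sub _ _ _ _ (differentiableAt_const 0) ((hpD k x).fun_mul (hpD l x)),
      pd_mul _ _ _ _ (hpD k x) (hpD l x), pd_const]

lemma g2_diff (s : (Fin d → ℝ) → Fin C → ℝ) (hs : ∀ k, ContDiff ℝ 2 (fun y => s y k))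
    (i j : Fin d) (z : Fin d → ℝ) : DifferentiableAt ℝ (g2 s i j) z := by
  refine DifferentiableAt.fun_sum fun k _ => DifferentiableAt.fun_sum fun l _ => ?_
  exact ((diff_pd _ (hs k) z i).mul (Efun_diff s hs k l z)).mul (diff_pd _ (hs l) z j)

lemma Dmat_apply (s : (Fin d → ℝ) → Fin C → ℝ) (y : Fin d → ℝ) (i j : Fin d) :
    Dmat s y i j = g2 s i j y := by
  simp only [Dmat, g2, Efun, Js, Matrix.mul_apply, Matrix.transpose_apply, Matrix.of_apply,
    Matrix.sub_apply, Matrix.diagonal_apply, Matrix.vecMulVec_apply, Finset.sum_mul,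
    Finset.mul_sum]
  rw [Finset.sum_comm]

lemma Dmat_symm (s : (Fin d → ℝ) → Fin C → ℝ) (y : Fin d → ℝ) (i j : Fin d) :
    Dmat s y i j = Dmat s y j i := by
  rw [Dmat_apply, Dmat_apply]
  unfold g2 Efun
  rw [Finset.sum_comm]
  refine Finset.sum_congr rfl fun k _ => Finset.sum_congr rfl fun l _ => ?_
  by_cases hkl : k = l
  · subst hkl; ring
  · have : ¬ l = k := fun h => hkl h.symm
    simp only [hkl, this, if_false]
    ring

lemma Fexpand (s : (Fin d → ℝ) → Fin C → ℝ) (b c : Fin C) (y : Fin d → ℝ) :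
    grad (fun z => softmax (s z) b) y ⬝ᵥ (Dmat s y).mulVec (grad (fun z => softmax (s z) c) y)
    = ∑ i, ∑ j, pd (fun z => softmax (s z) b) y i * g2 s i j y *
        pd (fun z => softmax (s z) c) y j := by
  simp only [dotProduct, Matrix.mulVec, grad, Finset.mul_sum]
  refine Finset.sum_congr rfl fun i _ => Finset.sum_congr rfl fun j _ => ?_
  rw [Dmat_apply]
  ring

lemma pd_g2 (s : (Fin d → ℝ) → Fin C → ℝ) (hs : ∀ k, ContDiff ℝ 2 (fun y => s y k))
    (x : Fin d → ℝ) (hhess : ∀ k, hess (fun y => s y k) x = 0) (i j : Fin d) (m : Fin d) :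
    pd (g2 s i j) x m = ∑ k, ∑ l, pd (fun z => s z k) x i * pd (Efun s k l) x m *
      pd (fun z => s z l) x j := by
  have hz : ∀ (k : Fin C) (u v : Fin d), pd (fun y => pd (fun z => s z k) y u) x v = 0 := by
    intro k u v
    have := congrFun (congrFun (hhess k) v) u
    simpa [hess] using this
  unfold g2
  rw [pd_sum _ _ _ _ (fun k _ => DifferentiableAt.fun_sum fun l _ =>
    ((diff_pd _ (hs k) x i).fun_mul (Efun_diff s hs k l x)).fun_mul (diff_pd _ (hs l) x j))]
  refine Finset.sum_congr rfl fun k _ => ?_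
  rw [pd_sum _ _ _ _ (fun l _ =>
    ((diff_pd _ (hs k) x i).fun_mul (Efun_diff s hs k l x)).fun_mul (diff_pd _ (hs l) x j))]
  refine Finset.sum_congr rfl fun l _ => ?_
  rw [pd_mul3 _ _ _ _ _ (diff_pd _ (hs k) x i) (Efun_diff s hs k l x) (diff_pd _ (hs l) x j)]
  rw [hz k i m, hz l j m]
  ring

end mid

/-- Product-rule expansion of e_a(g^D(e_b, e_c)). -/
theorem stmt19 (d C : ℕ) (s : (Fin d → ℝ) → Fin C → ℝ)
    (hs : ∀ k, ContDiff ℝ 2 (fun y => s y k)) (x : Fin d → ℝ)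
    (hhess : ∀ k, hess (fun y => s y k) x = 0) (a b c : Fin C) :
    ∑ i, grad (fun y => softmax (s y) a) x i *
        pd (fun y => (grad (fun z => softmax (s z) b) y) ⬝ᵥ
          (Dmat s y).mulVec (grad (fun z => softmax (s z) c) y)) x i
      = Mabc s a c b x + Mabc s a b c x
        + ((Js s x).mulVec (grad (fun y => softmax (s y) b) x)) ⬝ᵥ
            (Amat s a x).mulVec ((Js s x).mulVec (grad (fun y => softmax (s y) c) x)) := by
  have hp : ∀ k : Fin C, ContDiff ℝ 2 (fun y => softmax (s y) k) := contDiff_p s hs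
  have hFun : (fun y => (grad (fun z => softmax (s z) b) y) ⬝ᵥ
      (Dmat s y).mulVec (grad (fun z => softmax (s z) c) y))
      = fun y => ∑ i, ∑ j, pd (fun z => softmax (s z) b) y i * g2 s i j y *
          pd (fun z => softmax (s z) c) y j := funext (Fexpand s b c)
  have hterm : ∀ m, pd (fun y => ∑ i, ∑ j, pd (fun z => softmax (s z) b) y i * g2 s i j y *
      pd (fun z => softmax (s z) c) y j) x m
      = ∑ i, ∑ j,
          (hess (fun y => softmax (s y) b) x m i * Dmat s x i j
              * pd (fun z => softmax (s z) c) x j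
          + pd (fun z => softmax (s z) b) x i *
              (∑ k, ∑ l, pd (fun z => s z k) x i * pd (Efun s k l) x m *
                pd (fun z => s z l) x j) * pd (fun z => softmax (s z) c) x j
          + pd (fun z => softmax (s z) b) x i * Dmat s x i j
              * hess (fun y => softmax (s y) c) x m j) := by
    intro m
    rw [pd_sum _ _ _ _ (fun i _ => DifferentiableAt.fun_sum fun j _ =>
      ((diff_pd _ (hp b) x i).fun_mul (g2_diff s hs i j x)).fun_mul (diff_pd _ (hp c) x j))]
    refine Finset.sum_congr rfl fun i _ => ?_
    rw [pd_sum _ _ _ _ (fun j _ =>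
      ((diff_pd _ (hp b) x i).fun_mul (g2_diff s hs i j x)).fun_mul (diff_pd _ (hp c) x j))]
    refine Finset.sum_congr rfl fun j _ => ?_
    rw [pd_mul3 _ _ _ _ _ (diff_pd _ (hp b) x i) (g2_diff s hs i j x) (diff_pd _ (hp c) x j)]
    rw [pd_g2 s hs x hhess i j m]
    simp only [hess, Matrix.of_apply, Dmat_apply]
  simp only [grad] at *
  rw [hFun]
  simp only [hterm]
  have split : ∑ m, pd (fun y => softmax (s y) a) x m * ∑ i, ∑ j,
      (hess (fun y => softmax (s y) b) x m i * Dmat s x i j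
          * pd (fun z => softmax (s z) c) x j
      + pd (fun z => softmax (s z) b) x i *
          (∑ k, ∑ l, pd (fun z => s z k) x i * pd (Efun s k l) x m *
            pd (fun z => s z l) x j) * pd (fun z => softmax (s z) c) x j
      + pd (fun z => softmax (s z) b) x i * Dmat s x i j
          * hess (fun y => softmax (s y) c) x m j)
    = (∑ m, ∑ i, ∑ j, pd (fun y => softmax (s y) a) x m *
        (hess (fun y => softmax (s y) b) x m i * Dmat s x i j
          * pd (fun z => softmax (s z) c) x j))
    + (∑ m, ∑ i, ∑ j, pd (fun y => softmax (s y) a) x m *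
        (pd (fun z => softmax (s z) b) x i *
          (∑ k, ∑ l, pd (fun z => s z k) x i * pd (Efun s k l) x m *
            pd (fun z => s z l) x j) * pd (fun z => softmax (s z) c) x j))
    + (∑ m, ∑ i, ∑ j, pd (fun y => softmax (s y) a) x m *
        (pd (fun z => softmax (s z) b) x i * Dmat s x i j
          * hess (fun y => softmax (s y) c) x m j)) := by
    simp only [Finset.mul_sum, mul_add, Finset.sum_add_distrib]
  rw [split]
  have S1 : (∑ m, ∑ i, ∑ j, pd (fun y => softmax (s y) a) x m *
        (hess (fun y => softmax (s y) b) x m i * Dmat s x i j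
          * pd (fun z => softmax (s z) c) x j)) = Mabc s a b c x := by
    unfold Mabc
    simp only [dotProduct, Matrix.mulVec, grad, Finset.sum_mul, Finset.mul_sum, dotProduct]
    conv_lhs => rw [Finset.sum_comm]
    conv_lhs => enter [2, i]; rw [Finset.sum_comm]
    refine Finset.sum_congr rfl fun i _ => Finset.sum_congr rfl fun j _ =>
      Finset.sum_congr rfl fun m _ => ?_
    have hsymm : hess (fun y => softmax (s y) b) x m i
        = hess (fun y => softmax (s y) b) x i m := by
      simp only [hess, Matrix.of_apply]
      exact pd_pd_symm _ (hp b) x m i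
    rw [hsymm]
    ring
  have S3 : (∑ m, ∑ i, ∑ j, pd (fun y => softmax (s y) a) x m *
        (pd (fun z => softmax (s z) b) x i * Dmat s x i j
          * hess (fun y => softmax (s y) c) x m j)) = Mabc s a c b x := by
    unfold Mabc
    simp only [dotProduct, Matrix.mulVec, grad, Finset.sum_mul, Finset.mul_sum]
    conv_lhs => enter [2, m]; rw [Finset.sum_comm]
    conv_lhs => rw [Finset.sum_comm]
    conv_lhs => enter [2, j]; rw [Finset.sum_comm]
    refine Finset.sum_congr rfl fun j _ => Finset.sum_congr rfl fun i _ =>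
      Finset.sum_congr rfl fun m _ => ?_
    have hsymm : hess (fun y => softmax (s y) c) x m j
        = hess (fun y => softmax (s y) c) x j m := by
      simp only [hess, Matrix.of_apply]
      exact pd_pd_symm _ (hp c) x m j
    rw [hsymm, Dmat_symm]
    ring
  have S2 : (∑ m, ∑ i, ∑ j, pd (fun y => softmax (s y) a) x m *
        (pd (fun z => softmax (s z) b) x i *
          (∑ k, ∑ l, pd (fun z => s z k) x i * pd (Efun s k l) x m *
            pd (fun z => s z l) x j) * pd (fun z => softmax (s z) c) x j))
      = ((Js s x).mulVec (grad (fun y => softmax (s y) b) x)) ⬝ᵥ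
          (Amat s a x).mulVec ((Js s x).mulVec (grad (fun y => softmax (s y) c) x)) := by
    simp only [pd_Efun s hs, dotProduct, Matrix.mulVec, Amat, Js, Matrix.of_apply, grad,
      Finset.mul_sum, Finset.sum_mul]
    -- LHS ordered (m, i, j, k, l); reorder to (k, l, j, m, i) to match RHS
    conv_lhs => enter [2, m, 2, i]; rw [Finset.sum_comm]
    conv_lhs => enter [2, m]; rw [Finset.sum_comm]
    conv_lhs => rw [Finset.sum_comm]
    conv_lhs => enter [2, k, 2, m, 2, i]; rw [Finset.sum_comm]
    conv_lhs => enter [2, k, 2, m]; rw [Finset.sum_comm]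
    conv_lhs => enter [2, k]; rw [Finset.sum_comm]
    conv_lhs => enter [2, k, 2, l, 2, m]; rw [Finset.sum_comm]
    conv_lhs => enter [2, k, 2, l]; rw [Finset.sum_comm]
    refine Finset.sum_congr rfl fun k _ => Finset.sum_congr rfl fun l _ =>
      Finset.sum_congr rfl fun j _ => Finset.sum_congr rfl fun m _ =>
      Finset.sum_congr rfl fun i _ => ?_
    by_cases hkl : k = l
    · simp only [hkl, if_true]
      ring
    · simp only [hkl, if_false]
      ring
  rw [S1, S2, S3]
  ring
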